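/- For all natural numbers n ≥ k, F_{n,k} = |(d^k/dX^k binom(X,n))(0)|, i.e. F_{n,k} is the absolute value of the k-th derivative of the polynomial X(X-1)⋯(X-n+1)/n! evaluated at 0. -/

import Mathlib

open Polynomial

/-- `F n k = ∑ 1/(i₁⋯i_k)` over ordered `k`-tuples of positive integers with sum `n`. -/
def F (n k : ℕ) : ℚ :=
  ∑ f ∈ (Finset.Nat.antidiagonalTuple k n).filter (fun f => ∀ j, f j ≠ 0),
    ∏ j, (1 : ℚ) / (f j : ℚ)

/-- The binomial coefficient polynomial `binom(X,n) = X(X-1)⋯(X-n+1)/n!` in `ℚ[X]`. -/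
noncomputable def B (n : ℕ) : Polynomial ℚ :=
  C (1 / (n.factorial : ℚ)) * ∏ i ∈ Finset.range n, (X - C (i : ℚ))

noncomputable def L : PowerSeries ℚ := PowerSeries.mk fun i => (i:ℚ)⁻¹



lemma F_def' (n k : ℕ) :
    F n k = ∑ f ∈ Finset.Nat.antidiagonalTuple k n, ∏ j, ((f j : ℚ))⁻¹ := by
  rw [F]
  simp_rw [one_div]
  apply Finset.sum_filter_of_ne
  intro f _ hf j
  intro h0
  apply hf
  apply Finset.prod_eq_zero (Finset.mem_univ j)
  rw [h0]; simp

lemma sum_antidiagonalTuple_succ {k n : ℕ} (f : (Fin (k+1) → ℕ) → ℚ) :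
    ∑ x ∈ Finset.Nat.antidiagonalTuple (k+1) n, f x
      = ∑ p ∈ Finset.HasAntidiagonal.antidiagonal n, ∑ g ∈ Finset.Nat.antidiagonalTuple k p.2,
          f (Fin.cons p.1 g) := by
  rw [Finset.sum_sigma']
  refine Finset.sum_nbij' (fun x => ⟨(x 0, ∑ i, Fin.tail x i), Fin.tail x⟩)
      (fun x => Fin.cons x.1.1 x.2) ?_ ?_ ?_ ?_ ?_
  · intro a ha
    rw [Finset.Nat.mem_antidiagonalTuple] at ha
    simp only [Finset.mem_sigma, Finset.HasAntidiagonal.mem_antidiagonal, Finset.Nat.mem_antidiagonalTuple,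
      and_true]
    rw [← ha, Fin.sum_univ_succ]
    rfl
  · intro a ha
    simp only [Finset.mem_sigma, Finset.HasAntidiagonal.mem_antidiagonal,
      Finset.Nat.mem_antidiagonalTuple] at ha ⊢
    rw [Fin.sum_univ_succ]
    simp only [Fin.cons_zero, Fin.cons_succ]
    rw [ha.2, ha.1]
  · intro a ha
    simp [Fin.cons_self_tail]
  · intro a ha
    simp only [Finset.mem_sigma, Finset.HasAntidiagonal.mem_antidiagonal,
      Finset.Nat.mem_antidiagonalTuple] at ha
    obtain ⟨⟨p1, p2⟩, g⟩ := a
    simp only at ha ⊢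
    rw [Fin.cons_zero, Fin.tail_cons]
    rw [ha.2]
  · intro a ha
    rw [Fin.cons_self_tail]


lemma coeff_L_pow (k n : ℕ) : PowerSeries.coeff n (L ^ k) = F n k := by
  induction k generalizing n with
  | zero =>
    rw [pow_zero, F_def', PowerSeries.coeff_one]
    cases n with
    | zero => simp [Finset.Nat.antidiagonalTuple_zero_zero]
    | succ n => simp [Finset.Nat.antidiagonalTuple_zero_succ]
  | succ k ih =>
    rw [pow_succ', PowerSeries.coeff_mul, F_def', sum_antidiagonalTuple_succ
      (f := fun x => ∏ j, ((x j : ℚ))⁻¹)]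
    refine Finset.sum_congr rfl fun p hp => ?_
    rw [ih, F_def', Finset.mul_sum]
    refine Finset.sum_congr rfl fun g hg => ?_
    rw [Fin.prod_univ_succ]
    simp [L, Fin.cons_zero, Fin.cons_succ]


lemma key : (1 - PowerSeries.X) * (PowerSeries.derivative ℚ L) = 1 := by
  ext n
  rw [sub_mul, one_mul, map_sub]
  cases n with
  | zero =>
    rw [PowerSeries.coeff_zero_X_mul, PowerSeries.coeff_derivative]
    simp [L]
  | succ n =>
    rw [PowerSeries.coeff_succ_X_mul, PowerSeries.coeff_derivative,
      PowerSeries.coeff_derivative]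
    simp only [L, PowerSeries.coeff_mk, PowerSeries.coeff_one]
    have h1 : ((n:ℚ)+1) ≠ 0 := by positivity
    have h2 : ((n:ℚ)+1+1) ≠ 0 := by positivity
    push_cast
    rw [inv_mul_cancel₀ h2, inv_mul_cancel₀ h1]
    simp

lemma F_rec (n k : ℕ) :
    ((n:ℚ)+1) * F (n+1) (k+1) = ((k:ℚ)+1) * F n k + (n:ℚ) * F n (k+1) := by
  have h1 : PowerSeries.derivative ℚ (L ^ (k+1))
      = (k+1) • (L ^ k * PowerSeries.derivative ℚ L) := by
    rw [Derivation.leibniz_pow]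
    simp [smul_eq_mul]
  have h2 : (1 - PowerSeries.X) * PowerSeries.derivative ℚ (L^(k+1)) = (k+1) • L ^ k := by
    rw [h1, mul_smul_comm]
    rw [show (1 - PowerSeries.X) * (L^k * PowerSeries.derivative ℚ L)
        = L^k * ((1-PowerSeries.X) * PowerSeries.derivative ℚ L) by ring, key, mul_one]
  have h3 := congrArg (PowerSeries.coeff n) h2
  rw [sub_mul, one_mul, map_sub, map_nsmul, coeff_L_pow, nsmul_eq_mul,
    PowerSeries.coeff_derivative, coeff_L_pow] at h3
  push_cast at h3
  cases n with
  | zero =>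
    rw [PowerSeries.coeff_zero_X_mul] at h3
    push_cast
    push_cast at h3
    linarith [h3]
  | succ m =>
    rw [PowerSeries.coeff_succ_X_mul, PowerSeries.coeff_derivative, coeff_L_pow] at h3
    push_cast at h3 ⊢
    linarith [h3]

lemma F_zero_right (n : ℕ) : F n 0 = if n = 0 then 1 else 0 := by
  rw [← coeff_L_pow, pow_zero, PowerSeries.coeff_one]

lemma F_zero_left (k : ℕ) : F 0 (k+1) = 0 := by
  rw [← coeff_L_pow, PowerSeries.coeff_zero_eq_constantCoeff, map_pow]
  simp [L]

lemma F_nonneg (n k : ℕ) : 0 ≤ F n k := by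
  apply Finset.sum_nonneg
  intro f _
  apply Finset.prod_nonneg
  intro j _
  positivity

lemma claim (n : ℕ) : ∀ k, ((-1:ℚ))^(n+k) * (k.factorial : ℚ)
      * ((∏ i ∈ Finset.range n, (X - C (i:ℚ))).coeff k)
    = (n.factorial : ℚ) * F n k := by
  induction n with
  | zero =>
    intro k
    cases k with
    | zero => simp [F_zero_right]
    | succ k => simp [F_zero_left, Polynomial.coeff_one]
  | succ n ih =>
    intro k
    rw [Finset.prod_range_succ]
    cases k with
    | zero =>
      rw [Polynomial.mul_coeff_zero]
      have h0 : F (n+1) 0 = 0 := by rw [F_zero_right]; simp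
      rw [h0, mul_zero]
      cases n with
      | zero => simp
      | succ m =>
        have := ih 0
        rw [F_zero_right] at this
        simp only [Nat.succ_ne_zero, if_false, mul_zero, Nat.add_zero,
          Nat.factorial_zero, Nat.cast_one, mul_one] at this
        have hne : ((-1:ℚ))^(m+1) ≠ 0 := pow_ne_zero _ (by norm_num)
        have hc : (∏ x ∈ Finset.range (m + 1), (X - C (x:ℚ))).coeff 0 = 0 :=
          (mul_eq_zero.mp this).resolve_left hne
        rw [hc, zero_mul, mul_zero]
    | succ k =>
      rw [Polynomial.coeff_mul_X_sub_C]
      have A := ih k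
      have Bb := ih (k+1)
      have R := F_rec n k
      have hs2 : ((-1:ℚ))^(n+1+(k+1)) = (-1)^(n+k) := by
        rw [show n+1+(k+1) = (n+k)+2 by ring, pow_add, neg_one_sq, mul_one]
      have hs1 : ((-1:ℚ))^(n+(k+1)) = -(-1)^(n+k) := by
        rw [show n+(k+1) = (n+k)+1 by ring, pow_succ, mul_neg_one]
      rw [hs2]
      rw [hs1] at Bb
      have hf1 : ((k+1).factorial : ℚ) = ((k:ℚ)+1) * (k.factorial : ℚ) := by
        rw [Nat.factorial_succ]; push_cast; ring
      have hf2 : ((n+1).factorial : ℚ) = ((n:ℚ)+1) * (n.factorial : ℚ) := by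
        rw [Nat.factorial_succ]; push_cast; ring
      rw [hf1] at Bb ⊢
      rw [hf2]
      linear_combination ((k:ℚ)+1) * A + (n:ℚ) * Bb - (n.factorial:ℚ) * R

theorem F_eq_abs_iterated_derivative (n k : ℕ) (h : k ≤ n) :
    F n k = |(derivative^[k] (B n)).eval 0| := by
  have h1 : (derivative^[k] (B n)).eval 0 = (k.factorial : ℚ) * (B n).coeff k := by
    rw [← Polynomial.coeff_zero_eq_eval_zero, Polynomial.coeff_iterate_derivative]
    rw [Nat.zero_add, Nat.descFactorial_self, nsmul_eq_mul]
  have h2 : (B n).coeff k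
      = (1/(n.factorial:ℚ)) * ((∏ i ∈ Finset.range n, (X - C (i:ℚ))).coeff k) := by
    rw [B, Polynomial.coeff_C_mul]
  have h3 := claim n k
  have hs : ((-1:ℚ))^(n+k) * ((-1:ℚ))^(n+k) = 1 := by
    rw [← pow_add, Even.neg_one_pow ⟨n+k, by ring⟩]
  have hNf : ((n.factorial : ℚ)) ≠ 0 := by positivity
  have hinv : (n.factorial:ℚ) * ((n.factorial:ℚ))⁻¹ = 1 := mul_inv_cancel₀ hNf
  have heval : (derivative^[k] (B n)).eval 0 = ((-1:ℚ))^(n+k) * F n k := by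
    rw [h1, h2]
    linear_combination (((-1:ℚ))^(n+k) / (n.factorial:ℚ)) * h3
      - ((k.factorial:ℚ) * ((∏ i ∈ Finset.range n, (X - C (i:ℚ))).coeff k)
          / (n.factorial:ℚ)) * hs
      + (F n k * ((-1:ℚ))^n * ((-1:ℚ))^k) * hinv
  rw [heval, abs_mul, abs_pow, abs_neg, abs_one, one_pow, one_mul,
    abs_of_nonneg (F_nonneg n k)]
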